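/- Define Γ_m := Σ_{k=1}^m L^{2(k−1)} P_k for 0 ≤ m ≤ N. Then for every 0 ≤ n < N and every x ∈ Λ^N: E[ (Q_{N−n}(ξ · Γ_{N−n}ξ))(x) ] = (1 − L^{−d}) Σ_{k=1}^{N−n} L^{(2−d)(k−1)}, where ξ · Γ_{N−n}ξ denotes the pointwise product y ↦ ξ(y)·(Γ_{N−n}ξ)(y). In particular, for N ≥ 1 and every x ∈ Λ^N: E[ (Q_1(ξ · P_1 ξ))(x) ] = 1 − L^{−d} and E[ ξ(x)·(P_1 ξ)(x) ] = 1 − L^{−d}. -/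

import Mathlib

open MeasureTheory ProbabilityTheory Filter

namespace Hier

/-! ## The hierarchical lattice

A point of the unit lattice `Λ^N = (ℤ/L^Nℤ)^d` (for `L` odd) is encoded by its
balanced base-`L` digits: the coordinate `i` of the point is
`∑_{k<N} L^k · (x i k)`, where the digit `x i k ∈ ZMod L` is identified with its
representative in `{-(L-1)/2, …, (L-1)/2}`.  The level-`n` block `B_n(x)` is the
set of points sharing with `x` all digits of index `≥ n`, and the centre of a
level-`n` block is the point all of whose digits of index `< n` vanish. -/

variable (L d : ℕ)

/-- A point of the unit lattice `Λ^N`, in hierarchical digit coordinates. -/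
abbrev Pt (N : ℕ) : Type := Fin d → Fin N → ZMod L

/-- Transport along an equality of lattice sizes. -/
def reindex {M M' : ℕ} (h : M = M') (z : Pt L d M) : Pt L d M' :=
  fun i k => z i (Fin.cast h.symm k)

/-- Replace the `n` lowest digits of `x` by `a`; as `a` varies this enumerates
the level-`n` block `B_n(x)` of `x`. -/
def paste {N n : ℕ} (hn : n ≤ N) (x : Pt L d N) (a : Fin d → Fin n → ZMod L) :
    Pt L d N :=
  fun i k => if h : (k : ℕ) < n then a i ⟨k, h⟩ else x i k

/-- The centre of the level-`m` block of `Λ^N` indexed by `z ∈ Λ^{N-m}` (the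
point `L^m z`). -/
def embed {N m : ℕ} (hm : m ≤ N) (z : Pt L d (N - m)) : Pt L d N :=
  fun i k =>
    if h : m ≤ (k : ℕ) then z i ⟨(k : ℕ) - m, by have := k.isLt; omega⟩ else 0

variable [NeZero L]

/-- The averaging operator `Q_n g (x) = L^{-nd} ∑_{y ∈ B_n(x)} g(y)`. -/
noncomputable def Qop {N : ℕ} (n : ℕ) (hn : n ≤ N) (g : Pt L d N → ℝ) :
    Pt L d N → ℝ :=
  fun x => ((L : ℝ) ^ (n * d))⁻¹ * ∑ a : Fin d → Fin n → ZMod L, g (paste L d hn x a)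

/-- The fluctuation operator `P_n = Q_{n-1} - Q_n` (for `1 ≤ n ≤ N`). -/
noncomputable def Pop {N : ℕ} (n : ℕ) (hn : n ≤ N) (g : Pt L d N → ℝ) :
    Pt L d N → ℝ :=
  fun x => Qop L d (n - 1) (le_trans (Nat.sub_le n 1) hn) g x - Qop L d n hn g x

/-- The rescaling `S_m`, sending `f : Λ^N → ℝ` to `S_m f : Λ^{N-m} → ℝ`,
`(S_m f)(z) = f(L^m z)`.  In particular `scale … (Qop …)` is the coarse
graining `S_m Q_m`. -/
noncomputable def scale {N m : ℕ} (hm : m ≤ N) (f : Pt L d N → ℝ) :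
    Pt L d (N - m) → ℝ :=
  fun z => f (embed L d hm z)

/-- The hierarchical Green operator `G_N = ∑_{k=1}^N L^{2(k-1)} P_k`. -/
noncomputable def green (N : ℕ) (g : Pt L d N → ℝ) : Pt L d N → ℝ :=
  fun x => ∑ k : Fin N, (L : ℝ) ^ (2 * (k : ℕ)) * Pop L d ((k : ℕ) + 1) k.isLt g x

/-- The (negative of the) hierarchical Laplacian
`(-Δ_{H,N}) = ∑_{n=1}^N L^{-2(n-1)} P_n`. -/
noncomputable def lap (N : ℕ) (g : Pt L d N → ℝ) : Pt L d N → ℝ :=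
  fun x => ∑ k : Fin N, ((L : ℝ) ^ (2 * (k : ℕ)))⁻¹ * Pop L d ((k : ℕ) + 1) k.isLt g x

/-- The fluctuation propagator `Γ_m = ∑_{k=1}^m L^{2(k-1)} P_k` acting on
functions on `Λ^N` (`m ≤ N`). -/
noncomputable def gammaProp {N : ℕ} (m : ℕ) (hm : m ≤ N) (g : Pt L d N → ℝ) :
    Pt L d N → ℝ :=
  fun x => ∑ k : Fin m, (L : ℝ) ^ (2 * (k : ℕ)) *
    Pop L d ((k : ℕ) + 1) (le_trans k.isLt hm) g x

/-- `x` and `y` lie in the same level-`m` block of `Λ^N`. -/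
def sameBlock {N : ℕ} (m : ℕ) (x y : Pt L d N) : Prop :=
  ∀ (i : Fin d) (k : Fin N), m ≤ (k : ℕ) → x i k = y i k

end Hier



section GaussAux
open Real

lemma hier_int_x_exp : ∫ x : ℝ, x * Real.exp (-(1/2 : ℝ) * x ^ 2) = 0 := by
  have hderiv : ∀ x : ℝ, HasDerivAt (fun x : ℝ => -Real.exp (-(1/2 : ℝ) * x ^ 2))
      (x * Real.exp (-(1/2 : ℝ) * x ^ 2)) x := by
    intro x
    have h1 : HasDerivAt (fun x : ℝ => -(1/2 : ℝ) * x ^ 2) (-x) x := by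
      simpa using ((hasDerivAt_pow 2 x).const_mul (-(1/2 : ℝ)))
    have := (h1.exp).neg
    exact this.congr_deriv (by ring)
  exact integral_eq_zero_of_hasDerivAt_of_integrable hderiv
    (integrable_mul_exp_neg_mul_sq (by norm_num))
    ((integrable_exp_neg_mul_sq (by norm_num : (0:ℝ) < 1/2)).neg)

lemma hier_integrable_sq_exp :
    Integrable (fun x : ℝ => x ^ 2 * Real.exp (-(1/2 : ℝ) * x ^ 2)) := by
  have := integrable_rpow_mul_exp_neg_mul_sq (by norm_num : (0:ℝ) < 1/2)
    (by norm_num : (-1:ℝ) < 2)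
  convert this using 2 with x
  rw [show ((2:ℝ)) = ((2:ℕ):ℝ) by norm_num, Real.rpow_natCast]

lemma hier_int_sq_exp : ∫ x : ℝ, x ^ 2 * Real.exp (-(1/2 : ℝ) * x ^ 2)
    = ∫ x : ℝ, Real.exp (-(1/2 : ℝ) * x ^ 2) := by
  have hderiv : ∀ x : ℝ, HasDerivAt (fun x : ℝ => -x * Real.exp (-(1/2 : ℝ) * x ^ 2))
      (x ^ 2 * Real.exp (-(1/2 : ℝ) * x ^ 2) - Real.exp (-(1/2 : ℝ) * x ^ 2)) x := by
    intro x
    have h1 : HasDerivAt (fun x : ℝ => -(1/2 : ℝ) * x ^ 2) (-x) x := by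
      simpa using ((hasDerivAt_pow 2 x).const_mul (-(1/2 : ℝ)))
    have h2 : HasDerivAt (fun x : ℝ => Real.exp (-(1/2 : ℝ) * x ^ 2))
        ((-x) * Real.exp (-(1/2 : ℝ) * x ^ 2)) x := by simpa [mul_comm] using h1.exp
    have := (hasDerivAt_neg x).mul h2
    exact this.congr_deriv (by ring)
  have hint : Integrable (fun x : ℝ => x ^ 2 * Real.exp (-(1/2 : ℝ) * x ^ 2)
      - Real.exp (-(1/2 : ℝ) * x ^ 2)) :=
    hier_integrable_sq_exp.sub (integrable_exp_neg_mul_sq (by norm_num))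
  have h0 := integral_eq_zero_of_hasDerivAt_of_integrable hderiv hint
    (by have := (integrable_mul_exp_neg_mul_sq (by norm_num : (0:ℝ) < 1/2)).neg
        convert this using 2 with x; simp)
  have := integral_sub hier_integrable_sq_exp
    (integrable_exp_neg_mul_sq (by norm_num : (0:ℝ) < 1/2))
  rw [h0] at this
  linarith [this]

noncomputable def hierPhi (x : ℝ) : ℝ := (√(2 * π))⁻¹ * Real.exp (-(1/2 : ℝ) * x ^ 2)

lemma hierPhi_nonneg (x : ℝ) : 0 ≤ hierPhi x := by
  unfold hierPhi
  positivity

lemma hierPhi_meas : Measurable hierPhi := by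
  unfold hierPhi
  fun_prop

lemma hier_gaussianPDFReal_01 : gaussianPDFReal 0 1 = hierPhi := by
  funext x
  simp only [gaussianPDFReal, hierPhi, NNReal.coe_one, mul_one, sub_zero]
  ring_nf

lemma hier_gaussianReal_eq : gaussianReal 0 1 =
    volume.withDensity (fun x => (Real.toNNReal (hierPhi x) : ENNReal)) := by
  rw [gaussianReal_of_var_ne_zero 0 one_ne_zero]
  congr 1
  funext x
  rw [gaussianPDF_def]
  simp [hier_gaussianPDFReal_01, ENNReal.ofReal]

lemma hier_integral_phi_smul (g : ℝ → ℝ) :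
    ∫ x, g x ∂(gaussianReal 0 1) = ∫ x, hierPhi x * g x := by
  rw [hier_gaussianReal_eq,
    integral_withDensity_eq_integral_smul (hierPhi_meas.real_toNNReal) g]
  congr 1
  funext x
  simp [NNReal.smul_def, Real.coe_toNNReal _ (hierPhi_nonneg x)]

lemma hier_integrable_phi_iff (g : ℝ → ℝ) :
    Integrable g (gaussianReal 0 1) ↔ Integrable (fun x => hierPhi x * g x) := by
  rw [hier_gaussianReal_eq,
    integrable_withDensity_iff_integrable_smul (hierPhi_meas.real_toNNReal)]
  constructor <;> intro h <;>
  · refine h.congr (Filter.Eventually.of_forall fun x => ?_)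
    simp [NNReal.smul_def, Real.coe_toNNReal _ (hierPhi_nonneg x)]

lemma hier_gr_integrable_sq : Integrable (fun x : ℝ => x ^ 2) (gaussianReal 0 1) := by
  rw [hier_integrable_phi_iff _]
  have := hier_integrable_sq_exp.const_mul (√(2 * π))⁻¹
  refine this.congr (Filter.Eventually.of_forall fun x => ?_)
  unfold hierPhi; ring

lemma hier_gr_moment1 : ∫ x, x ∂(gaussianReal 0 1) = 0 := by
  rw [hier_integral_phi_smul]
  have : ∫ x : ℝ, hierPhi x * x
      = (√(2 * π))⁻¹ * ∫ x : ℝ, x * Real.exp (-(1/2 : ℝ) * x ^ 2) := by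
    rw [← integral_const_mul]
    congr 1; funext x; unfold hierPhi; ring
  rw [this, hier_int_x_exp, mul_zero]

lemma hier_gr_moment2 : ∫ x, x ^ 2 ∂(gaussianReal 0 1) = 1 := by
  rw [hier_integral_phi_smul]
  have h1 : ∫ x : ℝ, hierPhi x * x ^ 2
      = (√(2 * π))⁻¹ * ∫ x : ℝ, x ^ 2 * Real.exp (-(1/2 : ℝ) * x ^ 2) := by
    rw [← integral_const_mul]
    congr 1; funext x; unfold hierPhi; ring
  have h2 : (1:ℝ) = ∫ x : ℝ, gaussianPDFReal 0 1 x :=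
    (integral_gaussianPDFReal_eq_one 0 one_ne_zero).symm
  rw [h1, hier_int_sq_exp]
  rw [hier_gaussianPDFReal_01] at h2
  have h3 : (√(2 * π))⁻¹ * ∫ x : ℝ, Real.exp (-(1/2:ℝ) * x^2) = ∫ x : ℝ, hierPhi x := by
    unfold hierPhi
    rw [← integral_const_mul]
  rw [h3]
  exact h2.symm

end GaussAux

section ProbAux

open Hier

variable {L d N : ℕ} [NeZero L]
variable {Ω : Type} [MeasurableSpace Ω] {P : Measure Ω} [IsProbabilityMeasure P]
variable {ξ : Pt L d N → Ω → ℝ}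

lemma hier_e_id (hmeas : ∀ x, Measurable (ξ x))
    (hgauss : ∀ x, P.map (ξ x) = gaussianReal 0 1) (y : Pt L d N) :
    ∫ ω, ξ y ω ∂P = 0 := by
  have h := integral_map (μ := P) (φ := ξ y) (hmeas y).aemeasurable
    (f := fun x : ℝ => x) aestronglyMeasurable_id
  rw [hgauss y] at h
  rw [← h]
  exact hier_gr_moment1

lemma hier_e_sq (hmeas : ∀ x, Measurable (ξ x))
    (hgauss : ∀ x, P.map (ξ x) = gaussianReal 0 1) (y : Pt L d N) :
    ∫ ω, (ξ y ω) ^ 2 ∂P = 1 := by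
  have h := integral_map (μ := P) (φ := ξ y) (hmeas y).aemeasurable
    (f := fun x : ℝ => x ^ 2) ((measurable_id.pow_const 2).aestronglyMeasurable)
  rw [hgauss y] at h
  rw [← h]
  exact hier_gr_moment2

lemma hier_int_sq (hmeas : ∀ x, Measurable (ξ x))
    (hgauss : ∀ x, P.map (ξ x) = gaussianReal 0 1) (y : Pt L d N) :
    Integrable (fun ω => (ξ y ω) ^ 2) P := by
  have h : Integrable (fun x : ℝ => x ^ 2) (P.map (ξ y)) := by
    rw [hgauss y]; exact hier_gr_integrable_sq
  exact (integrable_map_measure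
    ((by fun_prop : Measurable fun x : ℝ => x ^ 2).aestronglyMeasurable)
    (hmeas y).aemeasurable).mp h

lemma hier_int_pair (hmeas : ∀ x, Measurable (ξ x))
    (hgauss : ∀ x, P.map (ξ x) = gaussianReal 0 1) (y y' : Pt L d N) :
    Integrable (fun ω => ξ y ω * ξ y' ω) P := by
  have hadd : Integrable (fun ω => (ξ y ω) ^ 2 + (ξ y' ω) ^ 2) P :=
    (hier_int_sq hmeas hgauss y).add (hier_int_sq hmeas hgauss y')
  refine hadd.mono'
    (((hmeas y).mul (hmeas y')).aestronglyMeasurable)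
    (Filter.Eventually.of_forall fun ω => ?_)
  rw [Real.norm_eq_abs, abs_mul]
  nlinarith [sq_nonneg (|ξ y ω| - |ξ y' ω|), sq_abs (ξ y ω), sq_abs (ξ y' ω),
    abs_nonneg (ξ y ω), abs_nonneg (ξ y' ω)]

lemma hier_e_pair (hmeas : ∀ x, Measurable (ξ x))
    (hgauss : ∀ x, P.map (ξ x) = gaussianReal 0 1)
    (hindep : iIndepFun ξ P) (y y' : Pt L d N) :
    ∫ ω, ξ y ω * ξ y' ω ∂P = if y = y' then 1 else 0 := by
  by_cases h : y = y'
  · subst h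
    rw [if_pos rfl]
    have := hier_e_sq hmeas hgauss y
    simpa [pow_two] using this
  · rw [if_neg h]
    have hind : ProbabilityTheory.IndepFun (ξ y) (ξ y') P := hindep.indepFun h
    rw [hind.integral_fun_mul_eq_mul_integral ((hmeas y).aestronglyMeasurable)
      ((hmeas y').aestronglyMeasurable), hier_e_id hmeas hgauss y, zero_mul]

lemma hier_paste_self_iff {n : ℕ} (hn : n ≤ N) (y : Pt L d N)
    (a : Fin d → Fin n → ZMod L) :
    paste L d hn y a = y ↔ a = fun (i : Fin d) (k : Fin n) => y i ⟨(k : ℕ), lt_of_lt_of_le k.isLt hn⟩ := by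
  constructor
  · intro h
    funext i k
    have h2 := congrFun (congrFun h i) ⟨(k : ℕ), lt_of_lt_of_le k.isLt hn⟩
    simpa [paste, k.isLt] using h2
  · intro h
    subst h
    funext i j
    simp only [paste]
    split
    · simp
    · rfl

lemma hier_sum_ite_paste {n : ℕ} (hn : n ≤ N) (y : Pt L d N) :
    ∑ a : Fin d → Fin n → ZMod L, (if y = paste L d hn y a then (1:ℝ) else 0) = 1 := by
  have h1 : ∀ a : Fin d → Fin n → ZMod L,
      (y = paste L d hn y a)
        = (a = fun (i : Fin d) (k : Fin n) => y i ⟨(k : ℕ), lt_of_lt_of_le k.isLt hn⟩) := fun a => propext (eq_comm.trans (hier_paste_self_iff hn y a))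
  simp only [h1]
  simp

lemma hier_e_mul_Q (hmeas : ∀ x, Measurable (ξ x))
    (hgauss : ∀ x, P.map (ξ x) = gaussianReal 0 1)
    (hindep : iIndepFun ξ P)
    (n : ℕ) (hn : n ≤ N) (y : Pt L d N) :
    ∫ ω, ξ y ω * Qop L d n hn (fun y' => ξ y' ω) y ∂P = ((L:ℝ)^(n*d))⁻¹ := by
  have hrw : (fun ω => ξ y ω * Qop L d n hn (fun y' => ξ y' ω) y)
      = fun ω => ((L:ℝ)^(n*d))⁻¹ *
          ∑ a : Fin d → Fin n → ZMod L, ξ y ω * ξ (paste L d hn y a) ω := by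
    funext ω
    simp only [Qop, Finset.mul_sum]
    exact Finset.sum_congr rfl fun a _ => by ring
  rw [hrw, integral_const_mul,
    integral_finset_sum _ (fun a _ => hier_int_pair hmeas hgauss y _)]
  have h2 : ∀ a : Fin d → Fin n → ZMod L,
      ∫ ω, ξ y ω * ξ (paste L d hn y a) ω ∂P
        = if y = paste L d hn y a then (1:ℝ) else 0 :=
    fun a => hier_e_pair hmeas hgauss hindep y _
  rw [Finset.sum_congr rfl (fun a _ => h2 a), hier_sum_ite_paste hn y, mul_one]

lemma hier_int_mul_Q (hmeas : ∀ x, Measurable (ξ x))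
    (hgauss : ∀ x, P.map (ξ x) = gaussianReal 0 1)
    (n : ℕ) (hn : n ≤ N) (y : Pt L d N) :
    Integrable (fun ω => ξ y ω * Qop L d n hn (fun y' => ξ y' ω) y) P := by
  have hrw : (fun ω => ξ y ω * Qop L d n hn (fun y' => ξ y' ω) y)
      = fun ω => ((L:ℝ)^(n*d))⁻¹ *
          ∑ a : Fin d → Fin n → ZMod L, ξ y ω * ξ (paste L d hn y a) ω := by
    funext ω
    simp only [Qop, Finset.mul_sum]
    exact Finset.sum_congr rfl fun a _ => by ring
  rw [hrw]
  exact (integrable_finset_sum _ (fun a _ => hier_int_pair hmeas hgauss y _)).const_mul _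

lemma hier_int_mul_P (hmeas : ∀ x, Measurable (ξ x))
    (hgauss : ∀ x, P.map (ξ x) = gaussianReal 0 1)
    (k : ℕ) (hk : k + 1 ≤ N) (y : Pt L d N) :
    Integrable (fun ω => ξ y ω * Pop L d (k+1) hk (fun y' => ξ y' ω) y) P := by
  have hrw : (fun ω => ξ y ω * Pop L d (k+1) hk (fun y' => ξ y' ω) y)
      = fun ω => ξ y ω * Qop L d k (le_trans (Nat.le_succ k) hk) (fun y' => ξ y' ω) y
          - ξ y ω * Qop L d (k+1) hk (fun y' => ξ y' ω) y := by
    funext ω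
    show ξ y ω * (Qop L d k _ _ y - Qop L d (k+1) hk _ y) = _
    ring
  rw [hrw]
  exact (hier_int_mul_Q hmeas hgauss k _ y).sub (hier_int_mul_Q hmeas hgauss (k+1) hk y)

lemma hier_e_mul_P (hmeas : ∀ x, Measurable (ξ x))
    (hgauss : ∀ x, P.map (ξ x) = gaussianReal 0 1)
    (hindep : iIndepFun ξ P)
    (k : ℕ) (hk : k + 1 ≤ N) (y : Pt L d N) :
    ∫ ω, ξ y ω * Pop L d (k+1) hk (fun y' => ξ y' ω) y ∂P
      = ((L:ℝ)^(k*d))⁻¹ - ((L:ℝ)^((k+1)*d))⁻¹ := by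
  have hrw : (fun ω => ξ y ω * Pop L d (k+1) hk (fun y' => ξ y' ω) y)
      = fun ω => ξ y ω * Qop L d k (le_trans (Nat.le_succ k) hk) (fun y' => ξ y' ω) y
          - ξ y ω * Qop L d (k+1) hk (fun y' => ξ y' ω) y := by
    funext ω
    show ξ y ω * (Qop L d k _ _ y - Qop L d (k+1) hk _ y) = _
    ring
  rw [hrw, integral_sub (hier_int_mul_Q hmeas hgauss k _ y)
    (hier_int_mul_Q hmeas hgauss (k+1) hk y),
    hier_e_mul_Q hmeas hgauss hindep k _ y,
    hier_e_mul_Q hmeas hgauss hindep (k+1) hk y]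

lemma hier_int_mul_Gamma (hmeas : ∀ x, Measurable (ξ x))
    (hgauss : ∀ x, P.map (ξ x) = gaussianReal 0 1)
    (m : ℕ) (hm : m ≤ N) (y : Pt L d N) :
    Integrable (fun ω => ξ y ω * gammaProp L d m hm (fun y' => ξ y' ω) y) P := by
  have hrw : (fun ω => ξ y ω * gammaProp L d m hm (fun y' => ξ y' ω) y)
      = fun ω => ∑ k : Fin m, (L:ℝ)^(2*(k:ℕ)) *
          (ξ y ω * Pop L d ((k:ℕ)+1) (le_trans k.isLt hm) (fun y' => ξ y' ω) y) := by
    funext ω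
    simp only [gammaProp, Finset.mul_sum]
    exact Finset.sum_congr rfl fun k _ => by ring
  rw [hrw]
  exact integrable_finset_sum _
    (fun (k : Fin m) _ => (hier_int_mul_P hmeas hgauss (k:ℕ) (le_trans k.isLt hm) y).const_mul _)

lemma hier_e_mul_Gamma (hmeas : ∀ x, Measurable (ξ x))
    (hgauss : ∀ x, P.map (ξ x) = gaussianReal 0 1)
    (hindep : iIndepFun ξ P)
    (m : ℕ) (hm : m ≤ N) (y : Pt L d N) :
    ∫ ω, ξ y ω * gammaProp L d m hm (fun y' => ξ y' ω) y ∂P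
      = ∑ k : Fin m, (L:ℝ)^(2*(k:ℕ)) *
          (((L:ℝ)^((k:ℕ)*d))⁻¹ - ((L:ℝ)^(((k:ℕ)+1)*d))⁻¹) := by
  have hrw : (fun ω => ξ y ω * gammaProp L d m hm (fun y' => ξ y' ω) y)
      = fun ω => ∑ k : Fin m, (L:ℝ)^(2*(k:ℕ)) *
          (ξ y ω * Pop L d ((k:ℕ)+1) (le_trans k.isLt hm) (fun y' => ξ y' ω) y) := by
    funext ω
    simp only [gammaProp, Finset.mul_sum]
    exact Finset.sum_congr rfl fun k _ => by ring
  rw [hrw, integral_finset_sum _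
    (fun (k : Fin m) _ => (hier_int_mul_P hmeas hgauss (k:ℕ) (le_trans k.isLt hm) y).const_mul _)]
  refine Finset.sum_congr rfl (fun (k : Fin m) _ => ?_)
  rw [integral_const_mul, hier_e_mul_P hmeas hgauss hindep (k:ℕ) (le_trans k.isLt hm) y]

lemma hier_int_Qop_outer (m : ℕ) (hm : m ≤ N) (F : Pt L d N → Ω → ℝ) (c : ℝ)
    (hF : ∀ y, Integrable (F y) P) (hc : ∀ y, ∫ ω, F y ω ∂P = c) (x : Pt L d N) :
    ∫ ω, Qop L d m hm (fun y => F y ω) x ∂P = c := by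
  have hrw : (fun ω => Qop L d m hm (fun y => F y ω) x)
      = fun ω => ((L:ℝ)^(m*d))⁻¹ *
          ∑ a : Fin d → Fin m → ZMod L, F (paste L d hm x a) ω := rfl
  rw [hrw, integral_const_mul, integral_finset_sum _ (fun a _ => hF _)]
  rw [Finset.sum_congr rfl (fun (a : Fin d → Fin m → ZMod L) _ => hc (paste L d hm x a)),
    Finset.sum_const, Finset.card_univ]
  have hcard : Fintype.card (Fin d → Fin m → ZMod L) = L^(m*d) := by
    rw [Fintype.card_fun, Fintype.card_fun, ZMod.card, Fintype.card_fin, Fintype.card_fin,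
      pow_mul]
  rw [hcard, nsmul_eq_mul, Nat.cast_pow, ← mul_assoc,
    inv_mul_cancel₀ (pow_ne_zero _ (Nat.cast_ne_zero.mpr (NeZero.ne L)) : ((L:ℝ)^(m*d)) ≠ 0), one_mul]

end ProbAux

lemma hier_arith (L d m : ℕ) (hL3 : 3 ≤ L) :
    ∑ k : Fin m, (L:ℝ)^(2*(k:ℕ)) *
        (((L:ℝ)^((k:ℕ)*d))⁻¹ - ((L:ℝ)^(((k:ℕ)+1)*d))⁻¹)
      = (1 - ((L : ℝ) ^ d)⁻¹) *
          ∑ k ∈ Finset.Icc 1 m, (L : ℝ) ^ (((2 : ℝ) - (d : ℝ)) * ((k : ℝ) - 1)) := by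
  have hL0 : (0:ℝ) < (L:ℝ) := by
    have : (3:ℝ) ≤ (L:ℝ) := by exact_mod_cast hL3
    linarith
  rw [Finset.mul_sum, Fin.sum_univ_eq_sum_range
    (fun k => (L:ℝ)^(2*k) * (((L:ℝ)^(k*d))⁻¹ - ((L:ℝ)^((k+1)*d))⁻¹))]
  rw [show Finset.Icc 1 m = Finset.Ico 1 (m+1) by rw [Finset.Ico_add_one_right_eq_Icc],
    Finset.sum_Ico_eq_sum_range]
  refine Finset.sum_congr rfl (fun j _ => ?_)
  have h1 : (L:ℝ) ^ (((2:ℝ) - (d:ℝ)) * (((1 + j : ℕ) : ℝ) - 1))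
      = (L:ℝ)^(2*j) * ((L:ℝ)^(d*j))⁻¹ := by
    have he : ((2:ℝ) - (d:ℝ)) * (((1 + j : ℕ) : ℝ) - 1)
        = ((2*j : ℕ) : ℝ) - ((d*j : ℕ) : ℝ) := by push_cast; ring
    rw [he, Real.rpow_sub hL0, Real.rpow_natCast, Real.rpow_natCast, div_eq_mul_inv]
  rw [h1]
  have e1 : (L:ℝ)^((j+1)*d) = (L:ℝ)^(j*d) * (L:ℝ)^d := by
    rw [show (j+1)*d = j*d + d by ring, pow_add]
  rw [e1, mul_inv, show d*j = j*d by ring]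
  ring

open Hier in
/-- With `Γ_m = ∑_{k=1}^m L^{2(k-1)} P_k`, for every
`0 ≤ n < N` and every `x ∈ Λ^N`:
`E[ (Q_{N-n}(ξ·Γ_{N-n}ξ))(x) ] = (1 − L^{-d}) ∑_{k=1}^{N-n} L^{(2-d)(k-1)}`;
in particular `E[ (Q₁(ξ·P₁ξ))(x) ] = 1 − L^{-d}` and
`E[ ξ(x)·(P₁ξ)(x) ] = 1 − L^{-d}`. -/
theorem statement_8 (L d : ℕ) [NeZero L] (hL : Odd L) (hL3 : 3 ≤ L) (hd : 1 ≤ d)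
    (N n : ℕ) (hn : n < N)
    (Ω : Type) [MeasurableSpace Ω] (P : Measure Ω) [IsProbabilityMeasure P]
    (ξ : Pt L d N → Ω → ℝ)
    (hmeas : ∀ x, Measurable (ξ x))
    (hgauss : ∀ x, P.map (ξ x) = gaussianReal 0 1)
    (hindep : iIndepFun ξ P) :
    (∀ x : Pt L d N,
      ∫ ω, Qop L d (N - n) (Nat.sub_le N n)
          (fun y => ξ y ω *
            gammaProp L d (N - n) (Nat.sub_le N n) (fun y' => ξ y' ω) y) x ∂P =
        (1 - ((L : ℝ) ^ d)⁻¹) *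
          ∑ k ∈ Finset.Icc 1 (N - n),
            (L : ℝ) ^ (((2 : ℝ) - (d : ℝ)) * ((k : ℝ) - 1))) ∧
    (∀ x : Pt L d N,
      ∫ ω, Qop L d 1 (show 1 ≤ N by omega)
          (fun y => ξ y ω *
            Pop L d 1 (show 1 ≤ N by omega) (fun y' => ξ y' ω) y) x ∂P =
        1 - ((L : ℝ) ^ d)⁻¹) ∧
    (∀ x : Pt L d N,
      ∫ ω, ξ x ω * Pop L d 1 (show 1 ≤ N by omega) (fun y' => ξ y' ω) x ∂P =
        1 - ((L : ℝ) ^ d)⁻¹) := by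
  have hm : N - n ≤ N := Nat.sub_le N n
  have h1N : 1 ≤ N := by omega
  refine ⟨?_, ?_, ?_⟩
  · intro x
    exact hier_int_Qop_outer (N - n) hm _ _
      (fun y => hier_int_mul_Gamma hmeas hgauss (N - n) hm y)
      (fun y => (hier_e_mul_Gamma hmeas hgauss hindep (N - n) hm y).trans
        (hier_arith L d (N - n) hL3)) x
  · intro x
    refine hier_int_Qop_outer 1 h1N _ _
      (fun y => hier_int_mul_P hmeas hgauss 0 h1N y)
      (fun y => ?_) x
    have := hier_e_mul_P hmeas hgauss hindep 0 h1N y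
    simpa using this
  · intro x
    have := hier_e_mul_P hmeas hgauss hindep 0 h1N x
    simpa using this
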